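/- Let G be a finite group and x, y distinct elements of the same order. Then the following are equivalent: (a) x is a power of y or y is a power of x; (b) ⟨x⟩ = ⟨y⟩; (c) x and y have the same closed neighbourhood in the power graph P(G). -/
import Mathlib


/-- The power graph of a group: distinct `x, y` are adjacent iff one is a
positive power of the other. -/
def powerGraph (G : Type*) [Group G] : SimpleGraph G :=
  SimpleGraph.fromRel (fun x y => ∃ m : ℕ, 0 < m ∧ x = y ^ m)

/-- The closed neighbourhood of a vertex in the power graph. -/
def closedNbhd {G : Type*} [Group G] (x : G) : Set G :=
  insert x ((powerGraph G).neighborSet x)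

/-- In a finite group, any element of `zpowers y` is a positive power of `y`. -/
lemma exists_pos_pow {G : Type*} [Group G] [Finite G] {y z : G}
    (hz : z ∈ Subgroup.zpowers y) : ∃ m : ℕ, 0 < m ∧ z = y ^ m := by
  obtain ⟨n, hn⟩ :=
    ((isOfFinOrder_of_finite y).mem_powers_iff_mem_zpowers).mpr hz
  rcases Nat.eq_zero_or_pos n with rfl | hpos
  · refine ⟨orderOf y, orderOf_pos y, ?_⟩
    simp only [pow_zero] at hn
    rw [pow_orderOf_eq_one, ← hn]
  · exact ⟨n, hpos, hn.symm⟩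

lemma zpowers_eq_of_mem {G : Type*} [Group G] [Finite G] {x y : G}
    (h : x ∈ Subgroup.zpowers y) (hord : orderOf x = orderOf y) :
    Subgroup.zpowers x = Subgroup.zpowers y := by
  refine Subgroup.eq_of_le_of_card_ge ((Subgroup.zpowers_le).mpr h) ?_
  rw [Nat.card_zpowers, Nat.card_zpowers, hord]

lemma closedNbhd_subset {G : Type*} [Group G] [Finite G] {x y : G}
    (hxy : x ≠ y) (h : Subgroup.zpowers x = Subgroup.zpowers y) :
    closedNbhd x ⊆ closedNbhd y := by
  intro z hz
  have hxmem : x ∈ Subgroup.zpowers y := h ▸ Subgroup.mem_zpowers x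
  rcases hz with rfl | hadj
  · -- z = x : show x is adjacent to y
    obtain ⟨m, hm, hxm⟩ := exists_pos_pow hxmem
    exact Set.mem_insert_iff.mpr (Or.inr ⟨Ne.symm hxy, Or.inr ⟨m, hm, hxm⟩⟩)
  · rw [SimpleGraph.mem_neighborSet, powerGraph, SimpleGraph.fromRel_adj] at hadj
    obtain ⟨hne, hcase⟩ := hadj
    by_cases hzy : z = y
    · exact Set.mem_insert_iff.mpr (Or.inl hzy)
    refine Set.mem_insert_iff.mpr (Or.inr ?_)
    rw [SimpleGraph.mem_neighborSet, powerGraph, SimpleGraph.fromRel_adj]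
    refine ⟨Ne.symm hzy, ?_⟩
    rcases hcase with ⟨m, hm, hxzm⟩ | ⟨m, hm, hzxm⟩
    · -- x = z ^ m, so y ∈ zpowers z
      have hxz : x ∈ Subgroup.zpowers z := ⟨(m : ℤ), by simpa using hxzm.symm⟩
      have hyz : y ∈ Subgroup.zpowers z :=
        Subgroup.zpowers_le.mp (h ▸ Subgroup.zpowers_le.mpr hxz)
      obtain ⟨k, hk, hyk⟩ := exists_pos_pow hyz
      exact Or.inl ⟨k, hk, hyk⟩
    · -- z = x ^ m, so z ∈ zpowers y
      have hzx : z ∈ Subgroup.zpowers y := h ▸ ⟨(m : ℤ), by simpa using hzxm.symm⟩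
      obtain ⟨k, hk, hzk⟩ := exists_pos_pow hzx
      exact Or.inr ⟨k, hk, hzk⟩

theorem same_order_tfae {G : Type*} [Group G] [Finite G] (x y : G)
    (hxy : x ≠ y) (hord : orderOf x = orderOf y) :
    (((∃ m : ℕ, 0 < m ∧ x = y ^ m) ∨ (∃ m : ℕ, 0 < m ∧ y = x ^ m)) ↔
        Subgroup.zpowers x = Subgroup.zpowers y) ∧
      (Subgroup.zpowers x = Subgroup.zpowers y ↔ closedNbhd x = closedNbhd y) := by
  have hab : ((∃ m : ℕ, 0 < m ∧ x = y ^ m) ∨ (∃ m : ℕ, 0 < m ∧ y = x ^ m)) ↔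
      Subgroup.zpowers x = Subgroup.zpowers y := by
    constructor
    · rintro (⟨m, hm, rfl⟩ | ⟨m, hm, rfl⟩)
      · exact zpowers_eq_of_mem ⟨(m : ℤ), by simp⟩ hord
      · exact (zpowers_eq_of_mem ⟨(m : ℤ), by simp⟩ hord.symm).symm
    · intro h
      obtain ⟨m, hm, hxm⟩ := exists_pos_pow (h ▸ Subgroup.mem_zpowers x)
      exact Or.inl ⟨m, hm, hxm⟩
  refine ⟨hab, ⟨fun h => Set.Subset.antisymm (closedNbhd_subset hxy h)
      (closedNbhd_subset (Ne.symm hxy) h.symm), fun h => ?_⟩⟩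
  have hy : y ∈ closedNbhd x := h ▸ Set.mem_insert y _
  rcases hy with hyx | hadj
  · exact absurd hyx.symm hxy
  · rw [SimpleGraph.mem_neighborSet, powerGraph, SimpleGraph.fromRel_adj] at hadj
    exact hab.mp hadj.2
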